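/- Let T = 3 and suppose a positive probability vector π on cells (i,j,k) ∈ (Fin r)³ satisfies the OQS[f] model with f(x) = (1−x)² and parameters β₁, β₂ and β₃ = 0. Then for all i, j, k: (1) π^c(i,j,k) − π^c(k,j,i) = (u(i) − u(k)) β₁ / (2 · #A((i,j,k))); (2) π^c(i,j,k) − π^c(i,k,j) = (u(j) − u(k)) β₂ / (2 · #A((i,j,k))); (3) π^c(i,j,k) − π^c(j,i,k) = (u(i) − u(j)) (β₁ − β₂) / (2 · #A((i,j,k))). -/

import Mathlib

/-- The orbit `A((i,j,k))` of a cell of an `r³` table: all coordinate permutations. -/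
def A3 {r : ℕ} (c : Fin r × Fin r × Fin r) : Finset (Fin r × Fin r × Fin r) :=
  {(c.1, c.2.1, c.2.2), (c.1, c.2.2, c.2.1), (c.2.1, c.1, c.2.2),
   (c.2.1, c.2.2, c.1), (c.2.2, c.1, c.2.1), (c.2.2, c.2.1, c.1)}

/-- The orbit average `π^S(i,j,k) = (1/#A((i,j,k))) ∑_{(s,t,u) ∈ A((i,j,k))} π(s,t,u)`. -/
noncomputable def orbitAvg3 {r : ℕ} (π : Fin r × Fin r × Fin r → ℝ)
    (c : Fin r × Fin r × Fin r) : ℝ :=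
  (∑ p ∈ A3 c, π p) / ((A3 c).card : ℝ)

/-- The conditional probability `π^c(i,j,k) = π(i,j,k) / ∑_{(s,t,u) ∈ A((i,j,k))} π(s,t,u)`. -/
noncomputable def condProb3 {r : ℕ} (π : Fin r × Fin r × Fin r → ℝ)
    (c : Fin r × Fin r × Fin r) : ℝ :=
  π c / (∑ p ∈ A3 c, π p)

lemma dlem (x : ℝ) : deriv (fun x : ℝ => (1 - x) ^ 2) x = 2 * x - 2 := by
  have h : HasDerivAt (fun x : ℝ => (1 - x) ^ 2) (2 * x - 2) x := by
    have h : HasDerivAt (fun x : ℝ => (1 - x) ^ 2) (((2 : ℕ) : ℝ) * (1 - x) ^ (2 - 1) * -1) x :=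
      (((hasDerivAt_id x).const_sub 1).fun_pow 2)
    convert h using 1
    simp [id]; ring
  exact h.deriv

lemma key (a b n S A B : ℝ) (hS : S ≠ 0) (hn : n ≠ 0)
    (h1 : 2 * (a * n / S) - 2 = A) (h2 : 2 * (b * n / S) - 2 = B) :
    a / S - b / S = (A - B) / (2 * n) := by
  field_simp at h1 h2 ⊢
  linear_combination h1 - h2

/-- Under the Pearsonian OQS model (OQS[f] with `f(x) = (1−x)²`, parameters `β₁, β₂`
and `β₃ = 0`), the differences of conditional probabilities between permuted cells
have the stated linear structure. -/
theorem POQS_condProb_differences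
    (r : ℕ) (hr : 2 ≤ r)
    (u : Fin r → ℝ) (humono : Monotone u)
    (hune : u ⟨0, by omega⟩ < u ⟨r - 1, by omega⟩)
    (π : Fin r × Fin r × Fin r → ℝ) (hpos : ∀ c, 0 < π c) (hsum : ∑ c, π c = 1)
    (β₁ β₂ β₃ : ℝ) (hβ₃ : β₃ = 0)
    (ψ : Fin r × Fin r × Fin r → ℝ) (hψ : ∀ c, ∀ p ∈ A3 c, ψ p = ψ c)
    -- OQS[f] model with f(x) = (1 − x)² (so F = f′):
    (hform : ∀ i j k : Fin r,
      deriv (fun x : ℝ => (1 - x) ^ 2) (π (i, j, k) / orbitAvg3 π (i, j, k)) =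
        β₁ * u i + β₂ * u j + β₃ * u k + ψ (i, j, k)) :
    ∀ i j k : Fin r,
      (condProb3 π (i, j, k) - condProb3 π (k, j, i) =
        (u i - u k) * β₁ / (2 * ((A3 (i, j, k)).card : ℝ))) ∧
      (condProb3 π (i, j, k) - condProb3 π (i, k, j) =
        (u j - u k) * β₂ / (2 * ((A3 (i, j, k)).card : ℝ))) ∧
      (condProb3 π (i, j, k) - condProb3 π (j, i, k) =
        (u i - u j) * (β₁ - β₂) / (2 * ((A3 (i, j, k)).card : ℝ))) := by
  intro i j k
  subst hβ₃
  have horb1 : A3 ((k, j, i) : Fin r × Fin r × Fin r) = A3 (i, j, k) := by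
    ext p; simp [A3]; tauto
  have horb2 : A3 ((i, k, j) : Fin r × Fin r × Fin r) = A3 (i, j, k) := by
    ext p; simp [A3]; tauto
  have horb3 : A3 ((j, i, k) : Fin r × Fin r × Fin r) = A3 (i, j, k) := by
    ext p; simp [A3]; tauto
  set S := ∑ p ∈ A3 ((i, j, k) : Fin r × Fin r × Fin r), π p with hSdef
  set n := ((A3 ((i, j, k) : Fin r × Fin r × Fin r)).card : ℝ) with hndef
  have hSpos : 0 < S := Finset.sum_pos (fun p _ => hpos p) ⟨(i, j, k), by simp [A3]⟩
  have hnpos : 0 < n := by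
    have : 0 < (A3 ((i, j, k) : Fin r × Fin r × Fin r)).card :=
      Finset.card_pos.mpr ⟨(i, j, k), by simp [A3]⟩
    rw [hndef]; exact_mod_cast this
  have hS0 : S ≠ 0 := ne_of_gt hSpos
  have hn0 : n ≠ 0 := ne_of_gt hnpos
  have hdiv : ∀ a : ℝ, a / orbitAvg3 π (i, j, k) = a * n / S := by
    intro a; rw [orbitAvg3, ← hSdef, ← hndef, div_div_eq_mul_div]
  have hψ1 : ψ ((k, j, i) : Fin r × Fin r × Fin r) = ψ (i, j, k) :=
    hψ (i, j, k) _ (by simp [A3])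
  have hψ2 : ψ ((i, k, j) : Fin r × Fin r × Fin r) = ψ (i, j, k) :=
    hψ (i, j, k) _ (by simp [A3])
  have hψ3 : ψ ((j, i, k) : Fin r × Fin r × Fin r) = ψ (i, j, k) :=
    hψ (i, j, k) _ (by simp [A3])
  have E : ∀ a b c : Fin r, A3 ((a, b, c) : Fin r × Fin r × Fin r) = A3 (i, j, k) →
      2 * (π (a, b, c) * n / S) - 2 = β₁ * u a + β₂ * u b + 0 * u c + ψ (a, b, c) := by
    intro a b c horb
    have h := hform a b c
    rw [dlem] at h
    rw [show orbitAvg3 π (a, b, c) = S / n by rw [orbitAvg3, horb, ← hSdef, ← hndef],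
      div_div_eq_mul_div] at h
    linarith [h]
  have e0 := E i j k rfl
  have e1 := E k j i horb1
  have e2 := E i k j horb2
  have e3 := E j i k horb3
  rw [hψ1] at e1; rw [hψ2] at e2; rw [hψ3] at e3
  refine ⟨?_, ?_, ?_⟩
  · rw [show condProb3 π ((i,j,k) : Fin r × Fin r × Fin r) = π (i,j,k) / S from rfl,
      show condProb3 π ((k,j,i) : Fin r × Fin r × Fin r) = π (k,j,i) / S by
        rw [condProb3, horb1],
      key _ _ n S _ _ hS0 hn0 e0 e1]
    ring
  · rw [show condProb3 π ((i,j,k) : Fin r × Fin r × Fin r) = π (i,j,k) / S from rfl,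
      show condProb3 π ((i,k,j) : Fin r × Fin r × Fin r) = π (i,k,j) / S by
        rw [condProb3, horb2],
      key _ _ n S _ _ hS0 hn0 e0 e2]
    ring
  · rw [show condProb3 π ((i,j,k) : Fin r × Fin r × Fin r) = π (i,j,k) / S from rfl,
      show condProb3 π ((j,i,k) : Fin r × Fin r × Fin r) = π (j,i,k) / S by
        rw [condProb3, horb3],
      key _ _ n S _ _ hS0 hn0 e0 e3]
    ring
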